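/- arXiv:2111.01085 — 6 statements merged into one kernel-verified Lean document; each statement's English description precedes it below -/
import Mathlib

section
/- Let α, β, α₁, β₁ ∈ k with 2β = 0 and 2β₁ = 0 in k, and suppose that the ideals (t⁶ + αt¹⁰, t⁹ + βt¹⁰) and (t⁶ + α₁t¹⁰, t⁹ + β₁t¹⁰) of A = k⟦t⁵, t⁶, t⁹⟧ are equal and are Ulrich ideals of A. Then α = α₁ and β = β₁. -/
noncomputable section

open PowerSeries

set_option synthInstance.maxHeartbeats 400000
set_option maxHeartbeats 800000

variable (k : Type*) [Field k]

/-- The subalgebra of `k⟦t⟧` consisting of power series supported on an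
additive submonoid `S ⊆ ℕ` (the "semigroup ring" of `S`). -/
def semigroupRing (S : AddSubmonoid ℕ) : Subalgebra k (PowerSeries k) where
  carrier := {f | ∀ n : ℕ, coeff n f ≠ 0 → n ∈ S}
  zero_mem' := by intro n hn; simp at hn
  add_mem' := by
    intro f g hf hg n hn
    by_contra h
    exact hn (by
      rw [map_add, of_not_not fun h1 => h (hf n h1), of_not_not fun h2 => h (hg n h2), add_zero])
  one_mem' := by
    intro n hn
    rw [coeff_one] at hn
    simp only [ne_eq, ite_eq_right_iff, not_forall] at hn
    exact hn.1 ▸ S.zero_mem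
  mul_mem' := by
    intro f g hf hg n hn
    rw [coeff_mul] at hn
    obtain ⟨p, hp, hne⟩ := Finset.exists_ne_zero_of_sum_ne_zero hn
    rw [Finset.HasAntidiagonal.mem_antidiagonal] at hp
    exact hp ▸ S.add_mem (hf p.1 (left_ne_zero_of_mul hne)) (hg p.2 (right_ne_zero_of_mul hne))
  algebraMap_mem' := by
    intro a n hn
    have : (algebraMap k (PowerSeries k)) a = C a := rfl
    rw [this, coeff_C] at hn
    simp only [ne_eq, ite_eq_right_iff, not_forall] at hn
    exact hn.1 ▸ S.zero_mem

lemma X_pow_mem {S : AddSubmonoid ℕ} {n : ℕ} (hn : n ∈ S) :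
    (X : PowerSeries k) ^ n ∈ semigroupRing k S := by
  intro m hm
  rw [coeff_X_pow] at hm
  simp only [ne_eq, ite_eq_right_iff, not_forall] at hm
  exact hm.1 ▸ hn

/-- The maximal ideal of a subalgebra of `k⟦t⟧`: the kernel of the constant-coefficient map. -/
def maximalIdealOf (A : Subalgebra k (PowerSeries k)) : Ideal A :=
  RingHom.ker ((constantCoeff (R := k)).comp A.val.toRingHom)

/-- `I` is an Ulrich ideal of `A`: `I` is `m`-primary, and there is `a ∈ I` such that `(a)`
is a reduction of `I`, `I ≠ (a)`, `I² = aI`, and `I/I²` is a free `A/I`-module. -/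
def IsUlrichIdeal (A : Subalgebra k (PowerSeries k)) (I : Ideal A) : Prop :=
  I.IsPrimary ∧ I.radical = maximalIdealOf k A ∧
  ∃ a ∈ I, (∃ n : ℕ, I ^ (n + 1) = Ideal.span {a} * I ^ n) ∧
    I ≠ Ideal.span {a} ∧
    I ^ 2 = Ideal.span {a} * I ∧
    Module.Free (A ⧸ I) I.Cotangent

/-- `A = k⟦t⁵,t⁶,t⁹⟧`. -/
def A569 : Subalgebra k (PowerSeries k) :=
  semigroupRing k (AddSubmonoid.closure ({5, 6, 9} : Set ℕ))

lemma mem569 {n : ℕ} (a b c : ℕ) (h : a * 5 + b * 6 + c * 9 = n) :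
    n ∈ AddSubmonoid.closure ({5, 6, 9} : Set ℕ) := by
  subst h
  have h5 : (5 : ℕ) ∈ AddSubmonoid.closure ({5, 6, 9} : Set ℕ) :=
    AddSubmonoid.subset_closure (by norm_num)
  have h6 : (6 : ℕ) ∈ AddSubmonoid.closure ({5, 6, 9} : Set ℕ) :=
    AddSubmonoid.subset_closure (by norm_num)
  have h9 : (9 : ℕ) ∈ AddSubmonoid.closure ({5, 6, 9} : Set ℕ) :=
    AddSubmonoid.subset_closure (by norm_num)
  simpa [smul_eq_mul] using
    add_mem (add_mem (nsmul_mem h5 a) (nsmul_mem h6 b)) (nsmul_mem h9 c)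

/-- `t⁶ + αt¹⁰` as an element of `A = k⟦t⁵,t⁶,t⁹⟧`. -/
def f569 (α : k) : A569 k :=
  ⟨X ^ 6 + α • X ^ 10, by
    refine add_mem (X_pow_mem k (mem569 0 1 0 (by norm_num)))
      (Subalgebra.smul_mem _ (X_pow_mem k (mem569 2 0 0 (by norm_num))) α)⟩

/-- `t⁹ + βt¹⁰` as an element of `A = k⟦t⁵,t⁶,t⁹⟧`. -/
def g569 (β : k) : A569 k :=
  ⟨X ^ 9 + β • X ^ 10, by
    refine add_mem (X_pow_mem k (mem569 0 0 1 (by norm_num)))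
      (Subalgebra.smul_mem _ (X_pow_mem k (mem569 2 0 0 (by norm_num))) β)⟩

lemma coeff_small_569 (r : A569 k) {n : ℕ} (h1 : n ≠ 0) (h2 : n < 5) :
    coeff n (r : PowerSeries k) = 0 := by
  by_contra h
  have hm := r.2 n h
  have key : ∀ m ∈ AddSubmonoid.closure ({5, 6, 9} : Set ℕ), m = 0 ∨ 5 ≤ m := by
    intro m hmem
    induction hmem using AddSubmonoid.closure_induction with
    | mem x hx => rcases hx with rfl | rfl | rfl <;> omega
    | zero => exact Or.inl rfl
    | add x y _ _ ihx ihy => omega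
  rcases key n hm with h0 | h5 <;> omega

lemma key_coeff (α β c6 c9 c10 : k) (p q : A569 k)
    (h : (p : PowerSeries k) * (X ^ 6 + α • X ^ 10)
        + (q : PowerSeries k) * (X ^ 9 + β • X ^ 10)
      = c6 • X ^ 6 + c9 • X ^ 9 + c10 • X ^ 10) :
    c6 * α + c9 * β = c10 := by
  have e6 := congrArg (coeff 6) h
  have e9 := congrArg (coeff 9) h
  have e10 := congrArg (coeff 10) h
  have hp3 : coeff 3 (p : PowerSeries k) = 0 := coeff_small_569 k p (by norm_num) (by norm_num)
  have hp4 : coeff 4 (p : PowerSeries k) = 0 := coeff_small_569 k p (by norm_num) (by norm_num)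
  have hq1 : coeff 1 (q : PowerSeries k) = 0 := coeff_small_569 k q (by norm_num) (by norm_num)
  simp only [mul_add, map_add, mul_smul_comm, map_smul, coeff_mul_X_pow', coeff_X_pow,
    smul_eq_mul] at e6 e9 e10
  norm_num at e6 e9 e10
  linear_combination e10 - α * e6 - β * e9 - hp4 - hq1 + β * hp3

/-- uniqueness of the parameters `α, β` in the normal form
`(t⁶ + αt¹⁰, t⁹ + βt¹⁰)` of an Ulrich ideal of `A = k⟦t⁵,t⁶,t⁹⟧`. -/
theorem ulrich_ideal_569_params_unique (α β α₁ β₁ : k)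
    (hβ : 2 * β = 0) (hβ₁ : 2 * β₁ = 0)
    (heq : Ideal.span {f569 k α, g569 k β} = Ideal.span {f569 k α₁, g569 k β₁})
    (hU : IsUlrichIdeal k (A569 k) (Ideal.span {f569 k α, g569 k β}))
    (hU₁ : IsUlrichIdeal k (A569 k) (Ideal.span {f569 k α₁, g569 k β₁})) :
    α = α₁ ∧ β = β₁ := by
  have hf : f569 k α₁ ∈ Ideal.span {f569 k α, g569 k β} := by
    rw [heq]; exact Ideal.subset_span (by simp)
  have hg : g569 k β₁ ∈ Ideal.span {f569 k α, g569 k β} := by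
    rw [heq]; exact Ideal.subset_span (by simp)
  rw [Ideal.mem_span_pair] at hf hg
  obtain ⟨p, q, hpq⟩ := hf
  obtain ⟨p', q', hpq'⟩ := hg
  constructor
  · have h1 : (p : PowerSeries k) * (X ^ 6 + α • X ^ 10)
        + (q : PowerSeries k) * (X ^ 9 + β • X ^ 10)
      = (1 : k) • X ^ 6 + (0 : k) • X ^ 9 + α₁ • X ^ 10 := by
      have := congrArg (Subtype.val) hpq
      push_cast at this
      simpa [f569, g569, one_smul] using this
    have := key_coeff k α β 1 0 α₁ p q h1
    linear_combination this
  · have h1 : (p' : PowerSeries k) * (X ^ 6 + α • X ^ 10)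
        + (q' : PowerSeries k) * (X ^ 9 + β • X ^ 10)
      = (0 : k) • X ^ 6 + (1 : k) • X ^ 9 + β₁ • X ^ 10 := by
      have := congrArg (Subtype.val) hpq'
      push_cast at this
      simpa [f569, g569, one_smul] using this
    have := key_coeff k α β 0 1 β₁ p' q' h1
    linear_combination this
end
end

section
/- There is no Ulrich ideal I of A = k⟦t⁵, t¹¹⟧ admitting elements f, g ∈ I with I = (f, g), I² = fI, o(f) = 10 and o(g) = 16. -/
noncomputable section

open PowerSeries

set_option synthInstance.maxHeartbeats 400000
set_option maxHeartbeats 800000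

variable (k : Type*) [Field k]

/-- `A = k⟦t⁵, t¹¹⟧`. -/
def A511 : Subalgebra k (PowerSeries k) :=
  semigroupRing k (AddSubmonoid.closure ({5, 11} : Set ℕ))

lemma mem511 {n : ℕ} (a b : ℕ) (h : a * 5 + b * 11 = n) :
    n ∈ AddSubmonoid.closure ({5, 11} : Set ℕ) := by
  subst h
  have h5 : (5 : ℕ) ∈ AddSubmonoid.closure ({5, 11} : Set ℕ) :=
    AddSubmonoid.subset_closure (by norm_num)
  have h11 : (11 : ℕ) ∈ AddSubmonoid.closure ({5, 11} : Set ℕ) :=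
    AddSubmonoid.subset_closure (by norm_num)
  simpa [smul_eq_mul] using add_mem (nsmul_mem h5 a) (nsmul_mem h11 b)

/-- `f = t²⁰ + αt²¹ + βt²² + γt²⁷ + δt³³` as an element of `A = k⟦t⁵,t¹¹⟧`. -/
def genF (α β γ δ : k) : A511 k :=
  ⟨X ^ 20 + α • X ^ 21 + β • X ^ 22 + γ • X ^ 27 + δ • X ^ 33, by
    refine add_mem (add_mem (add_mem (add_mem (X_pow_mem k (mem511 4 0 (by norm_num)))
      (Subalgebra.smul_mem _ (X_pow_mem k (mem511 2 1 (by norm_num))) α))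
      (Subalgebra.smul_mem _ (X_pow_mem k (mem511 0 2 (by norm_num))) β))
      (Subalgebra.smul_mem _ (X_pow_mem k (mem511 1 2 (by norm_num))) γ))
      (Subalgebra.smul_mem _ (X_pow_mem k (mem511 0 3 (by norm_num))) δ)⟩

/-- `g = t²⁶ + εt²⁷ + τt³³` as an element of `A = k⟦t⁵,t¹¹⟧`. -/
def genG (ε τ : k) : A511 k :=
  ⟨X ^ 26 + ε • X ^ 27 + τ • X ^ 33, by
    refine add_mem (add_mem (X_pow_mem k (mem511 3 1 (by norm_num)))
      (Subalgebra.smul_mem _ (X_pow_mem k (mem511 1 2 (by norm_num))) ε))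
      (Subalgebra.smul_mem _ (X_pow_mem k (mem511 0 3 (by norm_num))) τ)⟩

/-- `f = t¹⁰ + α₁t¹¹ + α₂t¹⁶ + α₃t²²` as an element of `A = k⟦t⁵,t¹¹⟧`. -/
def genF10 (α₁ α₂ α₃ : k) : A511 k :=
  ⟨X ^ 10 + α₁ • X ^ 11 + α₂ • X ^ 16 + α₃ • X ^ 22, by
    refine add_mem (add_mem (add_mem (X_pow_mem k (mem511 2 0 (by norm_num)))
      (Subalgebra.smul_mem _ (X_pow_mem k (mem511 0 1 (by norm_num))) α₁))
      (Subalgebra.smul_mem _ (X_pow_mem k (mem511 1 1 (by norm_num))) α₂))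
      (Subalgebra.smul_mem _ (X_pow_mem k (mem511 0 2 (by norm_num))) α₃)⟩

/-- `g = t²⁷` as an element of `A = k⟦t⁵,t¹¹⟧`. -/
def genG27 : A511 k :=
  ⟨X ^ 27, X_pow_mem k (mem511 1 2 (by norm_num))⟩

/-- `t³² + εt³³` as an element of `A = k⟦t⁵,t¹¹⟧`. -/
def elt32 (ε : k) : A511 k :=
  ⟨X ^ 32 + ε • X ^ 33, by
    refine add_mem (X_pow_mem k (mem511 2 2 (by norm_num)))
      (Subalgebra.smul_mem _ (X_pow_mem k (mem511 0 3 (by norm_num))) ε)⟩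

/-- Not in the numerical semigroup `⟨5,11⟩`: auxiliary. -/
lemma not_mem_closure_34 : (34 : ℕ) ∉ AddSubmonoid.closure ({5, 11} : Set ℕ) := by
  intro h
  have hle : AddSubmonoid.closure ({5, 11} : Set ℕ) ≤
      { carrier := {n | ∃ a b : ℕ, n = 5 * a + 11 * b}
        zero_mem' := ⟨0, 0, by norm_num⟩
        add_mem' := by
          rintro x y ⟨a, b, rfl⟩ ⟨c, d, rfl⟩
          exact ⟨a + c, b + d, by ring⟩ } := by
    rw [AddSubmonoid.closure_le]
    rintro x (rfl | rfl)
    · exact ⟨1, 0, by norm_num⟩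
    · exact ⟨0, 1, by norm_num⟩
  obtain ⟨a, b, hab⟩ := hle h
  omega

lemma enat_add_left_cancel {a b c : ℕ} {x : ℕ∞} (h : (a : ℕ∞) + x = (b : ℕ∞))
    (habc : a + c = b) : x = (c : ℕ∞) := by
  cases x with
  | top =>
    rw [add_top] at h
    exact absurd h.symm (by simp)
  | coe n =>
    have hn : a + n = b := by exact_mod_cast h
    have : n = c := by omega
    exact_mod_cast congrArg (Nat.cast : ℕ → ℕ∞) this

/-- no Ulrich ideal of `A = k⟦t⁵,t¹¹⟧` admits generators `f, g` with
`I = (f,g)`, `I² = fI`, `o(f) = 10` and `o(g) = 16`. -/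
theorem no_ulrich_ideal_511_with_orders_10_16 :
    ¬ ∃ (I : Ideal (A511 k)) (f g : A511 k),
      IsUlrichIdeal k (A511 k) I ∧ f ∈ I ∧ g ∈ I ∧
      I = Ideal.span {f, g} ∧ I ^ 2 = Ideal.span {f} * I ∧
      order (f : PowerSeries k) = 10 ∧ order (g : PowerSeries k) = 16 := by
  rintro ⟨I, f, g, hU, hfI, hgI, hspan, hsq, hof, hog⟩
  -- g² ∈ I² = fI, so g² = f·h with h ∈ I, and order h = 22.
  have hg2 : g * g ∈ Ideal.span {f} * I := by
    rw [← hsq, sq]; exact Ideal.mul_mem_mul hgI hgI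
  obtain ⟨h, hhI, hfh⟩ := Ideal.mem_span_singleton_mul.mp hg2
  have hfh' : (f : PowerSeries k) * h = (g : PowerSeries k) * g := by
    exact_mod_cast congrArg (Subtype.val) hfh
  have hoh : order (h : PowerSeries k) = 22 := by
    have h1 := order_mul (f : PowerSeries k) (h : PowerSeries k)
    rw [hfh', order_mul, hog, hof] at h1
    exact enat_add_left_cancel (a := 10) (b := 32) h1.symm (by norm_num)
  -- h² ∈ I² = fI, so h² = f·h' with h' ∈ I ⊆ A, and order h' = 34 ∉ H.
  have hh2 : h * h ∈ Ideal.span {f} * I := by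
    rw [← hsq, sq]; exact Ideal.mul_mem_mul hhI hhI
  obtain ⟨h', hh'I, hfh2⟩ := Ideal.mem_span_singleton_mul.mp hh2
  have hfh2' : (f : PowerSeries k) * h' = (h : PowerSeries k) * h := by
    exact_mod_cast congrArg (Subtype.val) hfh2
  have hoh' : order (h' : PowerSeries k) = 34 := by
    have h1 := order_mul (f : PowerSeries k) (h' : PowerSeries k)
    rw [hfh2', order_mul, hoh, hof] at h1
    have h2 : (10 : ℕ∞) + order (h' : PowerSeries k) = (44 : ℕ∞) := by
      rw [← h1]; norm_num
    exact enat_add_left_cancel (a := 10) (b := 44) (by exact_mod_cast h2) (by norm_num)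
  have hc : (coeff 34) (h' : PowerSeries k) ≠ 0 :=
    (order_eq_nat.mp (by exact_mod_cast hoh')).1
  exact not_mem_closure_34 (h'.2 34 hc)
end
end

section
/- Let α₁, α₂, α₃, α₁', α₂', α₃' ∈ k with α₁ ≠ 0 and α₁' ≠ 0, and suppose that the ideals (t¹⁰ + α₁t¹¹ + α₂t¹⁶ + α₃t²², t²⁷) and (t¹⁰ + α₁'t¹¹ + α₂'t¹⁶ + α₃'t²², t²⁷) of A = k⟦t⁵, t¹¹⟧ are equal. Then α₁ = α₁', α₂ = α₂' and α₃ = α₃'. -/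
noncomputable section

open PowerSeries

set_option synthInstance.maxHeartbeats 400000
set_option maxHeartbeats 800000

variable (k : Type*) [Field k]

/-- uniqueness of the parameters in the normal form
`(t¹⁰ + α₁t¹¹ + α₂t¹⁶ + α₃t²², t²⁷)` of ideals of `A = k⟦t⁵,t¹¹⟧`. -/
theorem params_unique_511_normal_form_10_27 (α₁ α₂ α₃ α₁' α₂' α₃' : k)
    (hα₁ : α₁ ≠ 0) (hα₁' : α₁' ≠ 0)
    (heq : Ideal.span {genF10 k α₁ α₂ α₃, genG27 k}
         = Ideal.span {genF10 k α₁' α₂' α₃', genG27 k}) :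
    α₁ = α₁' ∧ α₂ = α₂' ∧ α₃ = α₃' := by
  have hmem : genF10 k α₁' α₂' α₃' ∈ Ideal.span {genF10 k α₁ α₂ α₃, genG27 k} := by
    rw [heq]
    exact Ideal.subset_span (by simp)
  obtain ⟨u, v, huv⟩ := Ideal.mem_span_pair.mp hmem
  have hps : (u : PowerSeries k) * (X ^ 10 + α₁ • X ^ 11 + α₂ • X ^ 16 + α₃ • X ^ 22)
      + (v : PowerSeries k) * X ^ 27
      = X ^ 10 + α₁' • X ^ 11 + α₂' • X ^ 16 + α₃' • X ^ 22 := by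
    have := congrArg (Subtype.val) huv
    simpa [genF10, genG27] using this
  set U : PowerSeries k := (u : PowerSeries k) with hU
  have hUmem := u.2
  have hU0 : ∀ n : ℕ, (∀ a b : ℕ, a * 5 + b * 11 ≠ n) → coeff n U = 0 := by
    intro n hn
    by_contra h
    have := hUmem n h
    rw [AddSubmonoid.mem_closure_pair] at this
    obtain ⟨a, b, hab⟩ := this
    simp only [smul_eq_mul] at hab
    exact hn a b (by omega)
  have key : ∀ n : ℕ, n < 27 →
      coeff n (X ^ 10 + α₁' • X ^ 11 + α₂' • X ^ 16 + α₃' • X ^ 22 : PowerSeries k)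
      = (if 10 ≤ n then coeff (n - 10) U else 0)
        + α₁ * (if 11 ≤ n then coeff (n - 11) U else 0)
        + α₂ * (if 16 ≤ n then coeff (n - 16) U else 0)
        + α₃ * (if 22 ≤ n then coeff (n - 22) U else 0) := by
    intro n hn
    have hv : coeff n ((v : PowerSeries k) * X ^ 27) = 0 := by
      rw [coeff_mul_X_pow', if_neg (by omega)]
    rw [← hps, map_add, hv, add_zero]
    have : (u : PowerSeries k) * (X ^ 10 + α₁ • X ^ 11 + α₂ • X ^ 16 + α₃ • X ^ 22)
        = U * X ^ 10 + α₁ • (U * X ^ 11) + α₂ • (U * X ^ 16) + α₃ • (U * X ^ 22) := by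
      simp only [mul_add, mul_smul_comm]
      rfl
    rw [hU, this]
    simp [coeff_mul_X_pow']
    rfl
  have c1 : coeff 1 U = 0 := hU0 1 (by omega)
  have c4 : coeff 4 U = 0 := hU0 4 (by omega)
  have c6 : coeff 6 U = 0 := hU0 6 (by omega)
  have c9 : coeff 9 U = 0 := hU0 9 (by omega)
  have c12 : coeff 12 U = 0 := hU0 12 (by omega)
  have h10 := key 10 (by omega)
  have h11 := key 11 (by omega)
  have h15 := key 15 (by omega)
  have h16 := key 16 (by omega)
  have h20 := key 20 (by omega)
  have h21 := key 21 (by omega)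
  have h22 := key 22 (by omega)
  simp only [map_add, coeff_smul, coeff_X_pow, smul_eq_mul] at h10 h11 h15 h16 h20 h21 h22
  norm_num at h10 h11 h15 h16 h20 h21 h22
  have e5 : coeff 5 U = 0 := by linear_combination -h15 - α₁ * c4
  have e10 : coeff 10 U = 0 := by linear_combination -h20 - α₁ * c9 - α₂ * c4
  have e11 : coeff 11 U = 0 := by linear_combination -h21 - α₁ * e10 - α₂ * e5
  refine ⟨?_, ?_, ?_⟩
  · linear_combination -h11 + α₁ * h10 - c1
  · linear_combination -h16 - c6 - α₁ * e5 + α₂ * h10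
  · linear_combination -h22 - c12 - α₁ * e11 - α₂ * c6 + α₃ * h10
end
end

section
/- Let δ, ε, τ, δ₁, ε₁, τ₁ ∈ k with ε ≠ 0 and ε₁ ≠ 0, and suppose that the ideals (t²⁰ + 3εt²¹ + ε²t²² + (2τ − 55ε⁷)t²⁷ + δt³³, t²⁶ + 2εt²⁷ + τt³³) and (t²⁰ + 3ε₁t²¹ + ε₁²t²² + (2τ₁ − 55ε₁⁷)t²⁷ + δ₁t³³, t²⁶ + 2ε₁t²⁷ + τ₁t³³) of A = k⟦t⁵, t¹¹⟧ are equal and are Ulrich ideals of A. Then δ = δ₁, ε = ε₁ and τ = τ₁. -/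
noncomputable section

open PowerSeries

set_option synthInstance.maxHeartbeats 400000
set_option maxHeartbeats 800000

variable (k : Type*) [Field k]

lemma coeff_gap_511 {f : PowerSeries k} (hf : f ∈ A511 k) {n : ℕ}
    (hn : ∀ i j : ℕ, i * 5 + j * 11 ≠ n) : coeff n f = 0 := by
  by_contra h
  obtain ⟨i, j, hij⟩ := (AddSubmonoid.mem_closure_pair (5:ℕ) 11 n).mp (hf n h)
  exact hn i j (by simpa [smul_eq_mul] using hij)

/-- uniqueness of the parameters `δ, ε, τ` in the normal form
`(t²⁰ + 3εt²¹ + ε²t²² + (2τ − 55ε⁷)t²⁷ + δt³³, t²⁶ + 2εt²⁷ + τt³³)` of Ulrich ideals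
of `A = k⟦t⁵,t¹¹⟧`. -/
theorem ulrich_ideal_511_orders_20_26_params_unique (δ ε τ δ₁ ε₁ τ₁ : k)
    (hε : ε ≠ 0) (hε₁ : ε₁ ≠ 0)
    (heq : Ideal.span {genF k (3 * ε) (ε ^ 2) (2 * τ - 55 * ε ^ 7) δ, genG k (2 * ε) τ}
         = Ideal.span {genF k (3 * ε₁) (ε₁ ^ 2) (2 * τ₁ - 55 * ε₁ ^ 7) δ₁, genG k (2 * ε₁) τ₁})
    (hU : IsUlrichIdeal k (A511 k)
      (Ideal.span {genF k (3 * ε) (ε ^ 2) (2 * τ - 55 * ε ^ 7) δ, genG k (2 * ε) τ}))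
    (hU₁ : IsUlrichIdeal k (A511 k)
      (Ideal.span {genF k (3 * ε₁) (ε₁ ^ 2) (2 * τ₁ - 55 * ε₁ ^ 7) δ₁, genG k (2 * ε₁) τ₁})) :
    δ = δ₁ ∧ ε = ε₁ ∧ τ = τ₁ := by
  have hf1 : genF k (3 * ε₁) (ε₁ ^ 2) (2 * τ₁ - 55 * ε₁ ^ 7) δ₁ ∈
      Ideal.span {genF k (3 * ε) (ε ^ 2) (2 * τ - 55 * ε ^ 7) δ, genG k (2 * ε) τ} := by
    rw [heq]; exact Ideal.subset_span (Set.mem_insert _ _)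
  have hg1 : genG k (2 * ε₁) τ₁ ∈
      Ideal.span {genF k (3 * ε) (ε ^ 2) (2 * τ - 55 * ε ^ 7) δ, genG k (2 * ε) τ} := by
    rw [heq]; exact Ideal.subset_span (Set.mem_insert_of_mem _ rfl)
  rw [Ideal.mem_span_pair] at hf1 hg1
  obtain ⟨a, b, hab⟩ := hf1
  obtain ⟨c, d, hcd⟩ := hg1
  have habv : (a : PowerSeries k) * (X^20 + (3*ε) • X^21 + (ε^2) • X^22 + (2*τ-55*ε^7) • X^27 + δ • X^33)
      + (b : PowerSeries k) * (X^26 + (2*ε) • X^27 + τ • X^33)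
      = X^20 + (3*ε₁) • X^21 + (ε₁^2) • X^22 + (2*τ₁-55*ε₁^7) • X^27 + δ₁ • X^33 := by
    simpa [genF, genG] using congrArg Subtype.val hab
  have hcdv : (c : PowerSeries k) * (X^20 + (3*ε) • X^21 + (ε^2) • X^22 + (2*τ-55*ε^7) • X^27 + δ • X^33)
      + (d : PowerSeries k) * (X^26 + (2*ε) • X^27 + τ • X^33)
      = X^26 + (2*ε₁) • X^27 + τ₁ • X^33 := by
    simpa [genF, genG] using congrArg Subtype.val hcd
  have za : ∀ n : ℕ, (∀ i j : ℕ, i * 5 + j * 11 ≠ n) → coeff n (a : PowerSeries k) = 0 :=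
    fun n h => coeff_gap_511 k a.2 h
  have zb : ∀ n : ℕ, (∀ i j : ℕ, i * 5 + j * 11 ≠ n) → coeff n (b : PowerSeries k) = 0 :=
    fun n h => coeff_gap_511 k b.2 h
  have zc : ∀ n : ℕ, (∀ i j : ℕ, i * 5 + j * 11 ≠ n) → coeff n (c : PowerSeries k) = 0 :=
    fun n h => coeff_gap_511 k c.2 h
  have zd : ∀ n : ℕ, (∀ i j : ℕ, i * 5 + j * 11 ≠ n) → coeff n (d : PowerSeries k) = 0 :=
    fun n h => coeff_gap_511 k d.2 h
  have za1 := za 1 (by omega); have za3 := za 3 (by omega); have za4 := za 4 (by omega)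
  have za6 := za 6 (by omega); have za8 := za 8 (by omega); have za9 := za 9 (by omega)
  have za12 := za 12 (by omega); have za13 := za 13 (by omega)
  have zb1 := zb 1 (by omega); have zb3 := zb 3 (by omega); have zb4 := zb 4 (by omega)
  have zb6 := zb 6 (by omega); have zb7 := zb 7 (by omega)
  have zc1 := zc 1 (by omega); have zc3 := zc 3 (by omega); have zc4 := zc 4 (by omega)
  have zc6 := zc 6 (by omega); have zc8 := zc 8 (by omega); have zc9 := zc 9 (by omega)
  have zc7 := zc 7 (by omega); have zc12 := zc 12 (by omega); have zc13 := zc 13 (by omega)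
  have zd1 := zd 1 (by omega); have zd3 := zd 3 (by omega); have zd4 := zd 4 (by omega)
  have zd6 := zd 6 (by omega); have zd7 := zd 7 (by omega)
  have F20 := congrArg (coeff 20) habv
  have F21 := congrArg (coeff 21) habv
  have F25 := congrArg (coeff 25) habv
  have F26 := congrArg (coeff 26) habv
  have F30 := congrArg (coeff 30) habv
  have F31 := congrArg (coeff 31) habv
  have F32 := congrArg (coeff 32) habv
  have F33 := congrArg (coeff 33) habv
  have G20 := congrArg (coeff 20) hcdv
  have G25 := congrArg (coeff 25) hcdv
  have G26 := congrArg (coeff 26) hcdv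
  have G27 := congrArg (coeff 27) hcdv
  have G30 := congrArg (coeff 30) hcdv
  have G31 := congrArg (coeff 31) hcdv
  have G32 := congrArg (coeff 32) hcdv
  have G33 := congrArg (coeff 33) hcdv
  simp only [mul_add, mul_smul_comm, map_add, map_smul, coeff_mul_X_pow', coeff_X_pow,
    smul_eq_mul] at F20 F21 F25 F26 F30 F31 F32 F33 G20 G25 G26 G27 G30 G31 G32 G33
  norm_num [za1, za3, za4, za6, za8, za9, za12, za13, zb1, zb3, zb4, zb6, zb7,
    zc1, zc3, zc4, zc6, zc7, zc8, zc9, zc12, zc13, zd1, zd3, zd4, zd6, zd7]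
    at F20 F21 F25 F26 F30 F31 F32 F33 G20 G25 G26 G27 G30 G31 G32 G33

  have hd0 : constantCoeff (d : PowerSeries k) = 1 := by linear_combination G26 - 3*ε*G25
  have h2 : 2*ε = 2*ε₁ := by
    linear_combination G27 - ε^2*G25 - (2*τ-55*ε^7)*G20 - 2*ε*hd0
  have hee : ε = ε₁ := by linear_combination F21 - 3*ε*F20 - h2
  have hc11 : coeff 11 (c : PowerSeries k) = 0 := by
    have h : ε * coeff 11 (c : PowerSeries k) = 0 := by
      linear_combination G32 - 2*ε*G31 + 5*ε^2*G30 - (2*τ-55*ε^7)*G25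
    exact (mul_eq_zero.mp h).resolve_left hε
  have hτ : τ = τ₁ := by linear_combination G33 - ε^2*hc11 - δ*G20 - τ*hd0
  have hb0 : constantCoeff (b : PowerSeries k) = 0 := by linear_combination F26 - 3*ε*F25
  have ha11 : coeff 11 (a : PowerSeries k) = 0 := by
    have h : ε * coeff 11 (a : PowerSeries k) = 0 := by
      linear_combination F32 - 2*ε*F31 + 5*ε^2*F30 - (2*τ-55*ε^7)*F25
    exact (mul_eq_zero.mp h).resolve_left hε
  have hδ : δ = δ₁ := by linear_combination F33 - ε^2*ha11 - δ*F20 - τ*hb0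
  exact ⟨hδ, hee, hτ⟩
end
end

section
/- Let I be an Ulrich ideal of A = k⟦t⁵, t¹¹⟧ admitting elements f, g ∈ I with I = (f, g), I² = fI, o(f) = 20 and o(g) = 26. Set ξ = g/f ∈ V and B = I : I = A + Aξ (the blow-up algebra of I, a subring of V). Then the value semigroup v(B) = { o(h) : 0 ≠ h ∈ B } equals the numerical semigroup ⟨5, 6⟩ generated by 5 and 6, B is the closed k-subalgebra of V generated by t⁵ and ξ, and t⁶ ∉ B; in particular, B is not the semigroup ring of any numerical semigroup. -/
noncomputable section

open PowerSeries

set_option synthInstance.maxHeartbeats 400000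
set_option maxHeartbeats 800000

variable (k : Type*) [Field k]

-- generic: closure of a pair
lemma mem_closure_pair {x y : ℕ} {n : ℕ} :
    n ∈ AddSubmonoid.closure ({x, y} : Set ℕ) ↔ ∃ a b : ℕ, a * x + b * y = n := by
  constructor
  · intro h
    induction h using AddSubmonoid.closure_induction with
    | mem z hz =>
      rcases hz with rfl | rfl
      exacts [⟨1, 0, by ring⟩, ⟨0, 1, by ring⟩]
    | zero => exact ⟨0, 0, by ring⟩
    | add a b _ _ ha hb =>
      obtain ⟨a1, b1, rfl⟩ := ha; obtain ⟨a2, b2, rfl⟩ := hb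
      exact ⟨a1 + a2, b1 + b2, by ring⟩
  · rintro ⟨a, b, rfl⟩
    have hx : x ∈ AddSubmonoid.closure ({x, y} : Set ℕ) :=
      AddSubmonoid.subset_closure (by simp)
    have hy : y ∈ AddSubmonoid.closure ({x, y} : Set ℕ) :=
      AddSubmonoid.subset_closure (by simp)
    simpa [smul_eq_mul] using add_mem (nsmul_mem hx a) (nsmul_mem hy b)

lemma gap56 {n : ℕ} (h20 : 20 + n ∈ AddSubmonoid.closure ({5, 11} : Set ℕ))
    (h26 : 26 + n ∈ AddSubmonoid.closure ({5, 11} : Set ℕ))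
    (h32 : 32 + n ∈ AddSubmonoid.closure ({5, 11} : Set ℕ))
    (h38 : 38 + n ∈ AddSubmonoid.closure ({5, 11} : Set ℕ)) :
    ∃ a b : ℕ, a * 5 + b * 6 = n := by
  rw [mem_closure_pair] at h20 h26 h32 h38
  by_cases hn : 20 ≤ n
  · refine ⟨(n - 6 * (n % 5)) / 5, n % 5, ?_⟩
    omega
  · obtain ⟨a1, b1, e1⟩ := h20
    obtain ⟨a2, b2, e2⟩ := h26
    obtain ⟨a3, b3, e3⟩ := h32
    obtain ⟨a4, b4, e4⟩ := h38
    interval_cases n <;>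
      first
        | exact ⟨0, 0, rfl⟩
        | exact ⟨1, 0, rfl⟩
        | exact ⟨0, 1, rfl⟩
        | exact ⟨2, 0, rfl⟩
        | exact ⟨1, 1, rfl⟩
        | exact ⟨0, 2, rfl⟩
        | exact ⟨3, 0, rfl⟩
        | exact ⟨2, 1, rfl⟩
        | exact ⟨1, 2, rfl⟩
        | exact ⟨0, 3, rfl⟩
        | (exfalso; omega)

variable {k}

lemma A511_coeff {x : PowerSeries k} (hx : x ∈ A511 k) {n : ℕ} (h : coeff n x ≠ 0) :
    n ∈ AddSubmonoid.closure ({5, 11} : Set ℕ) := hx n h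

/-- The blow-up set `A + Aξ`. -/
def BSet (ξ : PowerSeries k) : Set (PowerSeries k) :=
  {x | ∃ a b : A511 k, x = (a : PowerSeries k) + (b : PowerSeries k) * ξ}

variable {ξ : PowerSeries k} {P Q f g : A511 k}

lemma memB_of_A (a : A511 k) : (a : PowerSeries k) ∈ BSet ξ := ⟨a, 0, by simp⟩

lemma memB_xi : ξ ∈ BSet ξ := ⟨0, 1, by simp⟩

lemma memB_add {x y : PowerSeries k} (hx : x ∈ BSet ξ) (hy : y ∈ BSet ξ) :
    x + y ∈ BSet ξ := by
  obtain ⟨a, b, rfl⟩ := hx; obtain ⟨c, d, rfl⟩ := hy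
  exact ⟨a + c, b + d, by push_cast; ring⟩

lemma memB_neg {x : PowerSeries k} (hx : x ∈ BSet ξ) : -x ∈ BSet ξ := by
  obtain ⟨a, b, rfl⟩ := hx
  exact ⟨-a, -b, by push_cast; ring⟩

lemma memB_sub {x y : PowerSeries k} (hx : x ∈ BSet ξ) (hy : y ∈ BSet ξ) :
    x - y ∈ BSet ξ := by
  rw [sub_eq_add_neg]; exact memB_add hx (memB_neg hy)

lemma memB_smul {x : PowerSeries k} (c : k) (hx : x ∈ BSet ξ) : c • x ∈ BSet ξ := by
  obtain ⟨a, b, rfl⟩ := hx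
  refine ⟨c • a, c • b, ?_⟩
  push_cast [Subalgebra.coe_smul]
  rw [smul_add, smul_mul_assoc]

lemma memB_mul (hquad : ξ ^ 2 = (P : PowerSeries k) + (Q : PowerSeries k) * ξ)
    {x y : PowerSeries k} (hx : x ∈ BSet ξ) (hy : y ∈ BSet ξ) : x * y ∈ BSet ξ := by
  obtain ⟨a, b, rfl⟩ := hx; obtain ⟨c, d, rfl⟩ := hy
  refine ⟨a * c + b * d * P, a * d + b * c + b * d * Q, ?_⟩
  push_cast
  linear_combination (b : PowerSeries k) * (d : PowerSeries k) * hquad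

lemma memB_one : (1 : PowerSeries k) ∈ BSet ξ := ⟨1, 0, by simp⟩

lemma memB_xi_pow (hquad : ξ ^ 2 = (P : PowerSeries k) + (Q : PowerSeries k) * ξ)
    (j : ℕ) : ξ ^ j ∈ BSet ξ := by
  induction j with
  | zero => simpa using memB_one
  | succ n ih => rw [pow_succ]; exact memB_mul hquad ih memB_xi

lemma fmulA (hfg : (f : PowerSeries k) * ξ = g) {x : PowerSeries k} (hx : x ∈ BSet ξ) :
    (f : PowerSeries k) * x ∈ A511 k := by
  obtain ⟨a, b, rfl⟩ := hx
  have : (f : PowerSeries k) * (↑a + ↑b * ξ) = ((f * a + b * g : A511 k) : PowerSeries k) := by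
    push_cast
    linear_combination (b : PowerSeries k) * hfg
  rw [this]
  exact SetLike.coe_mem _

section OrderFacts

variable (hfg : (f : PowerSeries k) * ξ = g)
  (hof : order (f : PowerSeries k) = 20) (hog : order (g : PowerSeries k) = 26)

include hfg hof hog

lemma xi_order : order ξ = 6 := by
  have h : (20 : ℕ∞) + order ξ = 26 := by
    rw [← hof, ← order_mul, hfg, hog]
  cases h' : order ξ with
  | top => rw [h'] at h; simp at h
  | coe m =>
    rw [h'] at h
    have : (20 : ℕ∞) = ((20 : ℕ) : ℕ∞) := by norm_cast
    rw [this] at h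
    norm_cast at h
    have : m = 6 := by omega
    rw [this]
    norm_cast

lemma xi_ne_zero : ξ ≠ 0 := by
  intro h
  have := xi_order hfg hof hog
  rw [h, order_zero] at this
  simp at this

lemma xi_pow_order (j : ℕ) : order (ξ ^ j) = ((6 * j : ℕ) : ℕ∞) := by
  induction j with
  | zero => simp [order_one]
  | succ n ih =>
    rw [pow_succ, order_mul, ih, xi_order hfg hof hog]
    have : (6 : ℕ∞) = ((6 : ℕ) : ℕ∞) := by norm_cast
    rw [this]
    norm_cast

lemma xi_pow_leadingCoeff (j : ℕ) : coeff (6 * j) (ξ ^ j) ≠ 0 :=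
  (order_eq_nat.mp (xi_pow_order hfg hof hog j)).1

omit hfg hog in
lemma f_ne_zero : (f : PowerSeries k) ≠ 0 := by
  intro h
  rw [h, order_zero] at hof
  simp at hof

/-- Upper bound on the value semigroup of `B`. -/
lemma memB_order_mem56 (hquad : ξ ^ 2 = (P : PowerSeries k) + (Q : PowerSeries k) * ξ)
    {x : PowerSeries k} (hx : x ∈ BSet ξ) {n : ℕ} (hn : order x = (n : ℕ∞)) :
    ∃ a b : ℕ, a * 5 + b * 6 = n := by
  have h1 : ∀ j : ℕ, (f : PowerSeries k) * (x * ξ ^ j) ∈ A511 k := fun j =>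
    fmulA hfg (memB_mul hquad hx (memB_xi_pow hquad j))
  have h2 : ∀ j : ℕ, order ((f : PowerSeries k) * (x * ξ ^ j))
      = ((20 + n + 6 * j : ℕ) : ℕ∞) := by
    intro j
    rw [order_mul, order_mul, hof, hn, xi_pow_order hfg hof hog]
    have : (20 : ℕ∞) = ((20 : ℕ) : ℕ∞) := by norm_cast
    rw [this]
    push_cast
    ring
  have h3 : ∀ j : ℕ, 20 + n + 6 * j ∈ AddSubmonoid.closure ({5, 11} : Set ℕ) := fun j =>
    A511_coeff (h1 j) (order_eq_nat.mp (h2 j)).1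
  refine gap56 ?_ ?_ ?_ ?_
  · simpa using h3 0
  · have h := h3 1; rwa [show 20 + n + 6 * 1 = 26 + n by omega] at h
  · have h := h3 2; rwa [show 20 + n + 6 * 2 = 32 + n by omega] at h
  · have h := h3 3; rwa [show 20 + n + 6 * 3 = 38 + n by omega] at h

/-- Lower bound: every element of `⟨5,6⟩` is attained. -/
lemma exists_memB_order (hquad : ξ ^ 2 = (P : PowerSeries k) + (Q : PowerSeries k) * ξ)
    {n : ℕ} (a b : ℕ) (hab : a * 5 + b * 6 = n) :
    ∃ h ∈ BSet ξ, h ≠ 0 ∧ order h = (n : ℕ∞) := by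
  refine ⟨(X : PowerSeries k) ^ (a * 5) * ξ ^ b, ?_, ?_, ?_⟩
  · exact memB_mul hquad
      (memB_of_A (⟨X ^ (a * 5), X_pow_mem k (mem511 a 0 rfl)⟩ : A511 k))
      (memB_xi_pow hquad b)
  · exact mul_ne_zero (pow_ne_zero _ X_ne_zero)
      (pow_ne_zero _ (xi_ne_zero hfg hof hog))
  · rw [order_mul, order_X_pow, xi_pow_order hfg hof hog]
    norm_cast
    omega

end OrderFacts

/-- Rigidity: a sum `∑ c_j ξ^j` with `c_j` supported in `5ℕ` and `j < 5` has all its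
low-order component coefficients vanishing when the sum has high order. -/
lemma rigid (hfg : (f : PowerSeries k) * ξ = g)
    (hof : order (f : PowerSeries k) = 20) (hog : order (g : PowerSeries k) = 26)
    (c : Fin 5 → PowerSeries k)
    (hc : ∀ j : Fin 5, ∀ n : ℕ, coeff n (c j) ≠ 0 → 5 ∣ n)
    {N : ℕ} (hs : ∀ i : ℕ, i < N → coeff i (∑ j : Fin 5, c j * ξ ^ (j : ℕ)) = 0) :
    ∀ (j : Fin 5) (n : ℕ), n + 6 * (j : ℕ) < N → coeff n (c j) = 0 := by
  suffices H : ∀ p, ∀ (j : Fin 5) (n : ℕ), n + 6 * (j : ℕ) = p → p < N →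
      coeff n (c j) = 0 by
    exact fun j n h => H _ j n rfl h
  intro p
  induction p using Nat.strong_induction_on with
  | _ p IH =>
    intro j n hpn hpN
    by_cases h5 : 5 ∣ n
    · have h0 : coeff p (∑ j' : Fin 5, c j' * ξ ^ (j' : ℕ)) = 0 := hs p hpN
      rw [map_sum] at h0
      have hterm : ∀ j' : Fin 5, coeff p (c j' * ξ ^ (j' : ℕ))
          = if j' = j then coeff n (c j) * coeff (6 * (j : ℕ)) (ξ ^ (j : ℕ)) else 0 := by
        intro j'
        rw [coeff_mul]
        by_cases hjj : j' = j
        · subst hjj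
          rw [if_pos rfl]
          apply Finset.sum_eq_single_of_mem (n, 6 * (j' : ℕ))
          · rw [Finset.HasAntidiagonal.mem_antidiagonal]; exact hpn
          · rintro ⟨u, v⟩ huv hne
            rw [Finset.HasAntidiagonal.mem_antidiagonal] at huv
            by_cases hcu : coeff u (c j') = 0
            · rw [hcu, zero_mul]
            have h5u : 5 ∣ u := hc j' u hcu
            rcases lt_or_ge (u + 6 * (j' : ℕ)) p with hlt | hge
            · exact absurd (IH _ hlt j' u rfl (lt_trans hlt hpN)) hcu
            · have hv : v ≤ 6 * (j' : ℕ) := by omega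
              rcases lt_or_eq_of_le hv with hvlt | hveq
              · rw [coeff_of_lt_order v (by
                  rw [xi_pow_order hfg hof hog]; exact_mod_cast hvlt), mul_zero]
              · exfalso
                apply hne
                have hu : u = n := by omega
                rw [hu, hveq]
        · rw [if_neg hjj]
          apply Finset.sum_eq_zero
          rintro ⟨u, v⟩ huv
          rw [Finset.HasAntidiagonal.mem_antidiagonal] at huv
          by_cases hcu : coeff u (c j') = 0
          · rw [hcu, zero_mul]
          have h5u : 5 ∣ u := hc j' u hcu
          rcases lt_or_ge (u + 6 * (j' : ℕ)) p with hlt | hge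
          · exact absurd (IH _ hlt j' u rfl (lt_trans hlt hpN)) hcu
          · have hv : v ≤ 6 * (j' : ℕ) := by omega
            rcases lt_or_eq_of_le hv with hvlt | hveq
            · rw [coeff_of_lt_order v (by
                rw [xi_pow_order hfg hof hog]; exact_mod_cast hvlt), mul_zero]
            · exfalso
              have hj := j.isLt
              have hj' := j'.isLt
              have hne' : (j' : ℕ) ≠ (j : ℕ) := fun h => hjj (Fin.ext h)
              omega
      rw [Finset.sum_congr rfl (fun j' _ => hterm j')] at h0
      rw [Finset.sum_ite_eq' Finset.univ j
        (fun _ => coeff n (c j) * coeff (6 * (j : ℕ)) (ξ ^ (j : ℕ))),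
        if_pos (Finset.mem_univ j)] at h0
      rcases mul_eq_zero.mp h0 with h | h
      · exact h
      · exact absurd h (xi_pow_leadingCoeff hfg hof hog j)
    · by_contra hne
      exact h5 (hc j n hne)

lemma memB_zero : (0 : PowerSeries k) ∈ BSet ξ := ⟨0, 0, by simp⟩

lemma memB_sum_cxi (hquad : ξ ^ 2 = (P : PowerSeries k) + (Q : PowerSeries k) * ξ)
    (c : Fin 5 → PowerSeries k) (hc : ∀ j : Fin 5, ∀ n : ℕ, coeff n (c j) ≠ 0 → 5 ∣ n) :
    (∑ j : Fin 5, c j * ξ ^ (j : ℕ)) ∈ BSet ξ := by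
  refine Finset.sum_induction _ _ (fun _ _ h1 h2 => memB_add h1 h2) memB_zero ?_
  intro j _
  have hcj : c j ∈ A511 k := by
    intro n h
    obtain ⟨m, hm⟩ := hc j n h
    exact mem511 m 0 (by omega)
  exact memB_mul hquad (memB_of_A (⟨c j, hcj⟩ : A511 k)) (memB_xi_pow hquad j)

section Greedy

variable (hfg : (f : PowerSeries k) * ξ = g)
  (hof : order (f : PowerSeries k) = 20) (hog : order (g : PowerSeries k) = 26)
  (hquad : ξ ^ 2 = (P : PowerSeries k) + (Q : PowerSeries k) * ξ)

include hfg hof hog hquad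

/-- Greedy approximation of elements of `B` by elements of `M = ∑_{j<5} R₀ ξ^j`. -/
lemma greedyM (m : ℕ) {x : PowerSeries k} (hx : x ∈ BSet ξ) :
    ∃ c : Fin 5 → PowerSeries k, (∀ j : Fin 5, ∀ n : ℕ, coeff n (c j) ≠ 0 → 5 ∣ n) ∧
      (X : PowerSeries k) ^ m ∣ (x - ∑ j : Fin 5, c j * ξ ^ (j : ℕ)) := by
  induction m with
  | zero => exact ⟨0, by simp, by simp⟩
  | succ m ih =>
    obtain ⟨c, hsupp, hdvd⟩ := ih
    set w := x - ∑ j : Fin 5, c j * ξ ^ (j : ℕ) with hw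
    rw [X_pow_dvd_iff] at hdvd
    by_cases hwm : coeff m w = 0
    · refine ⟨c, hsupp, ?_⟩
      rw [X_pow_dvd_iff]
      intro i hi
      rcases lt_or_eq_of_le (Nat.lt_succ_iff.mp hi) with h | h
      · exact hdvd i h
      · rw [h]; exact hwm
    · have hwB : w ∈ BSet ξ := memB_sub hx (memB_sum_cxi hquad c hsupp)
      have hword : order w = (m : ℕ∞) := order_eq_nat.mpr ⟨hwm, fun i hi => hdvd i hi⟩
      obtain ⟨a, b, hab⟩ := memB_order_mem56 hfg hof hog hquad hwB hword
      set b' : ℕ := b % 5 with hb'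
      set a' : ℕ := a + 6 * (b / 5) with ha'
      have hab' : a' * 5 + 6 * b' = m := by omega
      have hb'5 : b' < 5 := Nat.mod_lt _ (by norm_num)
      set jn : Fin 5 := ⟨b', hb'5⟩ with hjn
      set z : PowerSeries k := X ^ (a' * 5) * ξ ^ b' with hz
      have hzord : order z = (m : ℕ∞) := by
        rw [hz, order_mul, order_X_pow, xi_pow_order hfg hof hog]
        norm_cast
      have hℓ : coeff m z ≠ 0 := (order_eq_nat.mp hzord).1
      set s : k := coeff m w * (coeff m z)⁻¹ with hs
      set c' : Fin 5 → PowerSeries k :=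
        fun j => c j + (if j = jn then C s * X ^ (a' * 5) else 0) with hc'
      have hsum : ∑ j : Fin 5, c' j * ξ ^ (j : ℕ)
          = (∑ j : Fin 5, c j * ξ ^ (j : ℕ)) + C s * z := by
        rw [hc']
        simp only [add_mul, Finset.sum_add_distrib, ite_mul, zero_mul]
        rw [Finset.sum_ite_eq' Finset.univ jn
          (fun j => C s * X ^ (a' * 5) * ξ ^ (j : ℕ)), if_pos (Finset.mem_univ jn)]
        rw [hz]
        ring
      refine ⟨c', ?_, ?_⟩
      · intro j n h
        rw [hc'] at h
        simp only [map_add] at h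
        by_cases hj : j = jn
        · rw [if_pos hj, coeff_C_mul, coeff_X_pow] at h
          by_cases hn : n = a' * 5
          · exact ⟨a', by omega⟩
          · rw [if_neg hn, mul_zero, add_zero] at h
            exact hsupp j n h
        · rw [if_neg hj, map_zero, add_zero] at h
          exact hsupp j n h
      · rw [X_pow_dvd_iff]
        intro i hi
        have hxw : x - ∑ j : Fin 5, c' j * ξ ^ (j : ℕ) = w - C s * z := by
          rw [hsum, hw]; ring
        rw [hxw, map_sub, coeff_C_mul]
        rcases lt_or_eq_of_le (Nat.lt_succ_iff.mp hi) with h | h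
        · rw [hdvd i h, coeff_of_lt_order i (by rw [hzord]; exact_mod_cast h), mul_zero,
            sub_zero]
        · rw [h, hs, inv_mul_cancel_right₀ hℓ, sub_self]

/-- Every element approximable by `M` to all orders lies in `B`. -/
lemma closedM {x : PowerSeries k}
    (h : ∀ m : ℕ, ∃ c : Fin 5 → PowerSeries k,
      (∀ j : Fin 5, ∀ n : ℕ, coeff n (c j) ≠ 0 → 5 ∣ n) ∧
      (X : PowerSeries k) ^ m ∣ (x - ∑ j : Fin 5, c j * ξ ^ (j : ℕ))) :
    x ∈ BSet ξ := by
  choose cf hsupp hdvd using h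
  have hcoh : ∀ (j : Fin 5) (n m m' : ℕ), n + 25 ≤ m → n + 25 ≤ m' →
      coeff n (cf m j) = coeff n (cf m' j) := by
    intro j n m m' hm hm'
    have hd : (X : PowerSeries k) ^ (min m m') ∣
        ((∑ j : Fin 5, cf m j * ξ ^ (j : ℕ)) - (∑ j : Fin 5, cf m' j * ξ ^ (j : ℕ))) := by
      have h1 := (pow_dvd_pow (X : PowerSeries k) (min_le_right m m')).trans (hdvd m')
      have h2 := (pow_dvd_pow (X : PowerSeries k) (min_le_left m m')).trans (hdvd m)
      have := dvd_sub h1 h2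
      simpa using this
    have hdd : (∑ j : Fin 5, cf m j * ξ ^ (j : ℕ)) - (∑ j : Fin 5, cf m' j * ξ ^ (j : ℕ))
        = ∑ j : Fin 5, (cf m j - cf m' j) * ξ ^ (j : ℕ) := by
      rw [← Finset.sum_sub_distrib]
      exact Finset.sum_congr rfl fun j _ => by ring
    rw [hdd, X_pow_dvd_iff] at hd
    have := rigid hfg hof hog (fun j => cf m j - cf m' j)
      (fun j n hn => by
        rcases ne_or_eq (coeff n (cf m j)) 0 with h1 | h1
        · exact hsupp m j n h1
        · rw [map_sub, h1, zero_sub, neg_ne_zero] at hn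
          exact hsupp m' j n hn)
      hd j n (by have := j.isLt; omega)
    rw [map_sub, sub_eq_zero] at this
    exact this
  set CC : Fin 5 → PowerSeries k := fun j => PowerSeries.mk fun n => coeff n (cf (n + 25) j)
    with hCC
  have hCcoeff : ∀ (j : Fin 5) (n m : ℕ), n + 25 ≤ m → coeff n (CC j) = coeff n (cf m j) := by
    intro j n m hm
    rw [hCC]
    simp only [coeff_mk]
    exact hcoh j n (n + 25) m le_rfl hm
  have hx : x = ∑ j : Fin 5, CC j * ξ ^ (j : ℕ) := by
    ext N
    have hdN := hdvd (N + 25)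
    rw [X_pow_dvd_iff] at hdN
    have h1 : coeff N x = coeff N (∑ j : Fin 5, cf (N + 25) j * ξ ^ (j : ℕ)) := by
      have := hdN N (by omega)
      rw [map_sub, sub_eq_zero] at this
      exact this
    rw [h1, map_sum, map_sum]
    refine Finset.sum_congr rfl fun j _ => ?_
    rw [coeff_mul, coeff_mul]
    refine Finset.sum_congr rfl fun uv huv => ?_
    rw [Finset.HasAntidiagonal.mem_antidiagonal] at huv
    rw [hCcoeff j uv.1 (N + 25) (by omega)]
  rw [hx]
  exact memB_sum_cxi hquad CC fun j n hn => by
    rw [hCC] at hn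
    simp only [coeff_mk] at hn
    exact hsupp (n + 25) j n hn

omit hof hog in
/-- `adjoin k {X^5, ξ} ⊆ B`. -/
lemma adjoin_sub_B {y : PowerSeries k}
    (hy : y ∈ Algebra.adjoin k ({(X : PowerSeries k) ^ 5, ξ} : Set (PowerSeries k))) :
    y ∈ BSet ξ := by
  induction hy using Algebra.adjoin_induction with
  | mem z hz =>
    rcases hz with rfl | rfl
    · exact memB_of_A (⟨X ^ 5, X_pow_mem k (mem511 1 0 (by norm_num))⟩ : A511 k)
    · exact memB_xi
  | algebraMap r =>
    exact ⟨algebraMap k (A511 k) r, 0, by push_cast; simp⟩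
  | add u v hu hv ihu ihv => exact memB_add ihu ihv
  | mul u v hu hv ihu ihv => exact memB_mul hquad ihu ihv

/-- Greedy approximation of elements of `B` by elements of `adjoin k {X^5, ξ}`. -/
lemma greedyR (m : ℕ) {x : PowerSeries k} (hx : x ∈ BSet ξ) :
    ∃ y ∈ Algebra.adjoin k ({(X : PowerSeries k) ^ 5, ξ} : Set (PowerSeries k)),
      (X : PowerSeries k) ^ m ∣ (x - y) := by
  induction m with
  | zero => exact ⟨0, Subalgebra.zero_mem _, by simp⟩
  | succ m ih =>
    obtain ⟨y, hyR, hdvd⟩ := ih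
    set w := x - y with hw
    rw [X_pow_dvd_iff] at hdvd
    by_cases hwm : coeff m w = 0
    · refine ⟨y, hyR, ?_⟩
      rw [X_pow_dvd_iff]
      intro i hi
      rcases lt_or_eq_of_le (Nat.lt_succ_iff.mp hi) with h | h
      · exact hdvd i h
      · rw [h]; exact hwm
    · have hwB : w ∈ BSet ξ := memB_sub hx (adjoin_sub_B hfg hquad hyR)
      have hword : order w = (m : ℕ∞) := order_eq_nat.mpr ⟨hwm, fun i hi => hdvd i hi⟩
      obtain ⟨a, b, hab⟩ := memB_order_mem56 hfg hof hog hquad hwB hword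
      set z : PowerSeries k := X ^ (a * 5) * ξ ^ b with hz
      have hzR : z ∈ Algebra.adjoin k ({(X : PowerSeries k) ^ 5, ξ} : Set (PowerSeries k)) := by
        rw [hz, show (X : PowerSeries k) ^ (a * 5) = ((X : PowerSeries k) ^ 5) ^ a by
          rw [← pow_mul, mul_comm]]
        exact mul_mem (pow_mem (Algebra.subset_adjoin (by simp)) a)
          (pow_mem (Algebra.subset_adjoin (by simp)) b)
      have hzord : order z = (m : ℕ∞) := by
        rw [hz, order_mul, order_X_pow, xi_pow_order hfg hof hog]
        norm_cast
        omega
      have hℓ : coeff m z ≠ 0 := (order_eq_nat.mp hzord).1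
      set s : k := coeff m w * (coeff m z)⁻¹ with hs
      refine ⟨y + C s * z, add_mem hyR (mul_mem ?_ hzR), ?_⟩
      · have : C s = algebraMap k (PowerSeries k) s := rfl
        rw [this]
        exact Subalgebra.algebraMap_mem _ s
      · rw [X_pow_dvd_iff]
        intro i hi
        have hxw : x - (y + C s * z) = w - C s * z := by rw [hw]; ring
        rw [hxw, map_sub, coeff_C_mul]
        rcases lt_or_eq_of_le (Nat.lt_succ_iff.mp hi) with h | h
        · rw [hdvd i h, coeff_of_lt_order i (by rw [hzord]; exact_mod_cast h), mul_zero,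
            sub_zero]
        · rw [h, hs, inv_mul_cancel_right₀ hℓ, sub_self]

end Greedy

/-- `t⁶ ∉ B`. -/
lemma not_X6_mem (hquad : ξ ^ 2 = (P : PowerSeries k) + (Q : PowerSeries k) * ξ) :
    (X : PowerSeries k) ^ 6 ∉ BSet ξ := by
  rintro ⟨a, b, hab⟩
  have hw : (b : PowerSeries k) * ξ = X ^ 6 - (a : PowerSeries k) := by
    linear_combination -hab
  have hE : ((X : PowerSeries k) ^ 6 - (a : PowerSeries k)) ^ 2
      = ((b ^ 2 * P : A511 k) : PowerSeries k)
        + ((b * Q : A511 k) : PowerSeries k) * ((X : PowerSeries k) ^ 6 - (a : PowerSeries k)) := by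
    push_cast
    linear_combination (b : PowerSeries k) ^ 2 * hquad
      + ((b : PowerSeries k) * (Q : PowerSeries k)
        - ((X : PowerSeries k) ^ 6 - (a : PowerSeries k)) - (b : PowerSeries k) * ξ) * hw
  -- an auxiliary fact: coefficients of `X^6 - a` are supported in `{6} ∪ H`
  have hsupp : ∀ v : ℕ, coeff v ((X : PowerSeries k) ^ 6 - (a : PowerSeries k)) ≠ 0 →
      v = 6 ∨ ∃ p q : ℕ, p * 5 + q * 11 = v := by
    intro v hv
    by_cases h6 : v = 6
    · exact Or.inl h6
    · right
      rw [map_sub, coeff_X_pow, if_neg h6, zero_sub, neg_ne_zero] at hv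
      exact mem_closure_pair.mp (A511_coeff (SetLike.coe_mem a) hv)
  have h12 : coeff 12 (((X : PowerSeries k) ^ 6 - (a : PowerSeries k)) ^ 2) = 1 := by
    rw [pow_two, coeff_mul]
    rw [Finset.sum_eq_single_of_mem ((6 : ℕ), (6 : ℕ)) (by simp)]
    · have ha6 : coeff 6 (a : PowerSeries k) = 0 := by
        by_contra h
        obtain ⟨p, q, hpq⟩ := mem_closure_pair.mp (A511_coeff (SetLike.coe_mem a) h)
        omega
      rw [map_sub, coeff_X_pow, if_pos rfl, ha6, sub_zero, mul_one]
    · rintro ⟨u, v⟩ huv hne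
      rw [Finset.HasAntidiagonal.mem_antidiagonal] at huv
      by_cases hu : coeff u ((X : PowerSeries k) ^ 6 - (a : PowerSeries k)) = 0
      · rw [hu, zero_mul]
      by_cases hv : coeff v ((X : PowerSeries k) ^ 6 - (a : PowerSeries k)) = 0
      · rw [hv, mul_zero]
      exfalso
      rcases hsupp u hu with rfl | ⟨p1, q1, h1⟩
      · rcases hsupp v hv with rfl | ⟨p2, q2, h2⟩
        · exact hne rfl
        · omega
      · rcases hsupp v hv with rfl | ⟨p2, q2, h2⟩
        · omega
        · have hq1 : q1 ≤ 1 := by omega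
          have hq2 : q2 ≤ 1 := by omega
          interval_cases q1 <;> interval_cases q2 <;> omega
  have h12' : coeff 12 (((b ^ 2 * P : A511 k) : PowerSeries k)
      + ((b * Q : A511 k) : PowerSeries k)
        * ((X : PowerSeries k) ^ 6 - (a : PowerSeries k))) = 0 := by
    rw [map_add]
    have hA : coeff 12 ((b ^ 2 * P : A511 k) : PowerSeries k) = 0 := by
      by_contra h
      obtain ⟨p, q, hpq⟩ := mem_closure_pair.mp (A511_coeff (SetLike.coe_mem _) h)
      omega
    rw [hA, zero_add, coeff_mul]
    apply Finset.sum_eq_zero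
    rintro ⟨u, v⟩ huv
    rw [Finset.HasAntidiagonal.mem_antidiagonal] at huv
    by_cases hu : coeff u ((b * Q : A511 k) : PowerSeries k) = 0
    · rw [hu, zero_mul]
    by_cases hv : coeff v ((X : PowerSeries k) ^ 6 - (a : PowerSeries k)) = 0
    · rw [hv, mul_zero]
    exfalso
    obtain ⟨p1, q1, h1⟩ := mem_closure_pair.mp (A511_coeff (SetLike.coe_mem _) hu)
    rcases hsupp v hv with rfl | ⟨p2, q2, h2⟩
    · omega
    · have hq1 : q1 ≤ 1 := by omega
      have hq2 : q2 ≤ 1 := by omega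
      interval_cases q1 <;> interval_cases q2 <;> omega
  rw [hE, h12'] at h12
  exact one_ne_zero h12.symm

/-- for an Ulrich ideal of `A = k⟦t⁵,t¹¹⟧` with data `(a,b) = (20,26)`
and `ξ = g/f`, the blow-up algebra `B = A + Aξ` has value semigroup `⟨5,6⟩`, equals the
closed subalgebra of `V` generated by `t⁵` and `ξ` (i.e. the `t`-adic closure of the
subalgebra they generate), does not contain `t⁶`, and is not the semigroup ring of any
numerical semigroup. -/
theorem blowup_algebra_511_orders_20_26 (I : Ideal (A511 k)) (f g : A511 k)
    (hU : IsUlrichIdeal k (A511 k) I) (hf : f ∈ I) (hg : g ∈ I)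
    (hI : I = Ideal.span {f, g}) (hred : I ^ 2 = Ideal.span {f} * I)
    (hof : order (f : PowerSeries k) = 20) (hog : order (g : PowerSeries k) = 26)
    (ξ : PowerSeries k) (hξ : (f : PowerSeries k) * ξ = (g : PowerSeries k))
    (B : Set (PowerSeries k))
    (hB : B = {x | ∃ a b : A511 k, x = (a : PowerSeries k) + (b : PowerSeries k) * ξ}) :
    {n : ℕ | ∃ h ∈ B, h ≠ 0 ∧ order h = n}
        = (AddSubmonoid.closure ({5, 6} : Set ℕ) : Set ℕ) ∧
    B = {x | ∀ m : ℕ, ∃ y ∈ Algebra.adjoin k ({(X : PowerSeries k) ^ 5, ξ} :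
          Set (PowerSeries k)), (X : PowerSeries k) ^ m ∣ (x - y)} ∧
    (X : PowerSeries k) ^ 6 ∉ B ∧
    ∀ S : AddSubmonoid ℕ, {n : ℕ | n ∉ S}.Finite →
      B ≠ (semigroupRing k S : Set (PowerSeries k)) := by
  subst hB
  have hg2 : g * g ∈ I ^ 2 := by rw [sq]; exact Ideal.mul_mem_mul hg hg
  rw [hred] at hg2
  obtain ⟨z, hzI, hz⟩ := Ideal.mem_span_singleton_mul.mp hg2
  rw [hI, Ideal.mem_span_pair] at hzI
  obtain ⟨P, Q, hPQ⟩ := hzI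
  have hfne : (f : PowerSeries k) ≠ 0 := f_ne_zero hof
  have hquad : ξ ^ 2 = ((P : PowerSeries k)) + (Q : PowerSeries k) * ξ := by
    have hz' : ((f * z : A511 k) : PowerSeries k) = ((g * g : A511 k) : PowerSeries k) :=
      congrArg _ hz
    have hPQ' : ((P * f + Q * g : A511 k) : PowerSeries k) = ((z : A511 k) : PowerSeries k) :=
      congrArg _ hPQ
    push_cast at hz' hPQ'
    have h1 : (g : PowerSeries k) * g
        = (f : PowerSeries k) * ((P : PowerSeries k) * (f : PowerSeries k)
          + (Q : PowerSeries k) * (g : PowerSeries k)) := by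
      rw [← hz', ← hPQ']
    have h2 : (f : PowerSeries k) ^ 2 * ξ ^ 2
        = (f : PowerSeries k) ^ 2 * (((P : PowerSeries k)) + (Q : PowerSeries k) * ξ) := by
      linear_combination h1 + ((f : PowerSeries k) * ξ + (g : PowerSeries k)
        - (f : PowerSeries k) * (Q : PowerSeries k)) * hξ
    exact mul_left_cancel₀ (pow_ne_zero 2 hfne) h2
  have hBeq : {x : PowerSeries k | ∃ a b : A511 k,
      x = (a : PowerSeries k) + (b : PowerSeries k) * ξ} = BSet ξ := rfl
  rw [hBeq]
  refine ⟨?_, ?_, ?_, ?_⟩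
  · ext n
    simp only [Set.mem_setOf_eq, SetLike.mem_coe]
    constructor
    · rintro ⟨h, hhB, hh0, hord⟩
      obtain ⟨u, v, huv⟩ := memB_order_mem56 hξ hof hog hquad hhB hord
      exact mem_closure_pair.mpr ⟨u, v, huv⟩
    · intro hn
      obtain ⟨u, v, huv⟩ := mem_closure_pair.mp hn
      obtain ⟨h, h1, h2, h3⟩ := exists_memB_order hξ hof hog hquad u v huv
      exact ⟨h, h1, h2, h3⟩
  · ext x
    simp only [Set.mem_setOf_eq]
    constructor
    · intro hx m
      obtain ⟨y, hy1, hy2⟩ := greedyR hξ hof hog hquad m hx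
      exact ⟨y, hy1, hy2⟩
    · intro hx
      apply closedM hξ hof hog hquad
      intro m
      obtain ⟨y, hyR, hyd⟩ := hx m
      obtain ⟨c, hc1, hc2⟩ := greedyM hξ hof hog hquad m (adjoin_sub_B hξ hquad hyR)
      refine ⟨c, hc1, ?_⟩
      have hsplit : x - ∑ j : Fin 5, c j * ξ ^ (j : ℕ)
          = (x - y) + (y - ∑ j : Fin 5, c j * ξ ^ (j : ℕ)) := by ring
      rw [hsplit]
      exact dvd_add hyd hc2
  · exact not_X6_mem hquad
  · intro S hSfin hBS
    have hco : coeff 6 ξ ≠ 0 := by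
      have h6 : order ξ = ((6 : ℕ) : ℕ∞) := by
        rw [xi_order hξ hof hog]; norm_cast
      exact (order_eq_nat.mp h6).1
    have hξS : ξ ∈ semigroupRing k S := by
      have : ξ ∈ BSet ξ := memB_xi
      rw [hBS] at this
      exact this
    have h6S : (6 : ℕ) ∈ S := hξS 6 hco
    have hX6 : (X : PowerSeries k) ^ 6 ∈ BSet ξ := by
      rw [hBS]
      exact X_pow_mem k h6S
    exact not_X6_mem hquad hX6
end
end

section
/- Assume char(k) = 2. Let α, β, γ, δ, ε, τ ∈ k, and suppose that I = (t²⁰ + αt²¹ + βt²² + γt²⁷ + δt³³, t²⁶ + εt²⁷ + τt³³) is an Ulrich ideal of A = k⟦t⁵, t¹¹⟧ with I² = (t²⁰ + αt²¹ + βt²² + γt²⁷ + δt³³)·I. Then ε = 0, α ≠ 0, β = α², and γ = α⁷. -/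
noncomputable section

open PowerSeries

set_option synthInstance.maxHeartbeats 400000
set_option maxHeartbeats 800000

variable (k : Type*) [Field k]

lemma coeff_mul_C_mul_X_pow (x : k⟦X⟧) (c : k) (m N : ℕ) :
    coeff N (x * (C c * X ^ m)) = if m ≤ N then c * coeff (N - m) x else 0 := by
  rw [show x * (C c * X ^ m) = c • (x * X ^ m) by rw [smul_eq_C_mul]; ring,
    coeff_smul, coeff_mul_X_pow', smul_ite, smul_zero, smul_eq_mul]

lemma coeff_C_pow' (n m : ℕ) (c : k) :
    coeff n ((C c) ^ m) = if n = 0 then c ^ m else 0 := by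
  rw [← map_pow, coeff_C]

lemma coeff_A511_eq_zero (x : A511 k) (m : ℕ) (hm : ∀ a b : ℕ, 5*a + 11*b ≠ m) :
    coeff m (x : PowerSeries k) = 0 := by
  by_contra h
  obtain ⟨a, b, hab⟩ := (AddSubmonoid.mem_closure_pair (5:ℕ) 11 m).mp (x.2 m h)
  simp only [smul_eq_mul] at hab
  exact hm a b (by omega)

lemma genF_coe (α β γ δ : k) : ((genF k α β γ δ : A511 k) : PowerSeries k)
    = X^20 + C α * X^21 + C β * X^22 + C γ * X^27 + C δ * X^33 := by
  simp [genF, smul_eq_C_mul]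

lemma genG_coe (ε τ : k) : ((genG k ε τ : A511 k) : PowerSeries k)
    = X^26 + C ε * X^27 + C τ * X^33 := by
  simp [genG, smul_eq_C_mul]

lemma two_eq_zero_PS (h2 : (2:k) = 0) : (2 : PowerSeries k) = 0 := by
  rw [← map_ofNat (C (R := k)) 2, show ((OfNat.ofNat 2 : k)) = 0 from h2, map_zero]

lemma sq_genF (h2 : (2:k) = 0) (α β γ δ : k) :
    ((genF k α β γ δ : A511 k) : PowerSeries k) * ((genF k α β γ δ : A511 k) : PowerSeries k)
      = X^40 + C (α^2) * X^42 + C (β^2) * X^44 + C (γ^2) * X^54 + C (δ^2) * X^66 := by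
  have h2' := two_eq_zero_PS k h2
  rw [genF_coe]
  simp only [map_pow]
  linear_combination (C α * X^41 + C β * X^42 + C γ * X^47 + C δ * X^53
    + C α * C β * X^43 + C α * C γ * X^48 + C α * C δ * X^54
    + C β * C γ * X^49 + C β * C δ * X^55 + C γ * C δ * X^60) * h2'

lemma sq_genG (h2 : (2:k) = 0) (ε τ : k) :
    ((genG k ε τ : A511 k) : PowerSeries k) * ((genG k ε τ : A511 k) : PowerSeries k)
      = X^52 + C (ε^2) * X^54 + C (τ^2) * X^66 := by
  have h2' := two_eq_zero_PS k h2
  rw [genG_coe]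
  simp only [map_pow]
  linear_combination (C ε * X^53 + C τ * X^59 + C ε * C τ * X^60) * h2'

lemma genFG (α β γ δ ε τ : k) :
    ((genF k α β γ δ : A511 k) : PowerSeries k) * ((genG k ε τ : A511 k) : PowerSeries k)
      = X^46 + C (α+ε) * X^47 + C (β+α*ε) * X^48 + C (β*ε) * X^49
        + C (γ+τ) * X^53 + C (α*τ+γ*ε) * X^54 + C (β*τ) * X^55
        + C δ * X^59 + C (γ*τ+δ*ε) * X^60 + C (δ*τ) * X^66 := by
  rw [genF_coe, genG_coe]
  simp only [map_add, map_mul]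
  ring

/-- in characteristic `2`, if
`I = (t²⁰ + αt²¹ + βt²² + γt²⁷ + δt³³, t²⁶ + εt²⁷ + τt³³)` is an Ulrich ideal of
`A = k⟦t⁵,t¹¹⟧` with `I² = fI`, then `ε = 0`, `α ≠ 0`, `β = α²`, and `γ = α⁷`. -/
theorem ulrich_511_orders_20_26_coeff_relations_char_two (hch : ringChar k = 2)
    (α β γ δ ε τ : k)
    (hU : IsUlrichIdeal k (A511 k) (Ideal.span {genF k α β γ δ, genG k ε τ}))
    (hred : (Ideal.span {genF k α β γ δ, genG k ε τ}) ^ 2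
         = Ideal.span {genF k α β γ δ} * Ideal.span {genF k α β γ δ, genG k ε τ}) :
    ε = 0 ∧ α ≠ 0 ∧ β = α ^ 2 ∧ γ = α ^ 7 := by
  have h2 : (2:k) = 0 := by
    have := (ringChar.spec k 2).mpr (by rw [hch])
    exact_mod_cast this
  set f := genF k α β γ δ with hf
  set g := genG k ε τ with hg
  have hfI : f ∈ Ideal.span {f, g} := Ideal.subset_span (Set.mem_insert _ _)
  have hgI : g ∈ Ideal.span {f, g} := Ideal.subset_span (Set.mem_insert_of_mem _ rfl)
  have hg2 : g * g ∈ Ideal.span {f, g} ^ 2 := by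
    rw [pow_two]; exact Ideal.mul_mem_mul hgI hgI
  rw [hred] at hg2
  obtain ⟨c, hcI, hc⟩ := Ideal.mem_span_singleton_mul.mp hg2
  obtain ⟨u, v, huv⟩ := Ideal.mem_span_pair.mp hcI
  have keyA : u * (f * f) + v * (f * g) = g * g := by
    rw [← hc, ← huv]; ring
  have key : (u : PowerSeries k) * ((f : PowerSeries k) * (f : PowerSeries k))
      + (v : PowerSeries k) * ((f : PowerSeries k) * (g : PowerSeries k))
      = (g : PowerSeries k) * (g : PowerSeries k) := by
    exact_mod_cast congrArg (Subtype.val) keyA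
  rw [hf, hg, sq_genF k h2, sq_genG k h2, genFG] at key
  set c47 := α + ε with hc47
  set c48 := β + α*ε with hc48
  set c53 := γ + τ with hc53
  set c54 := α*τ + γ*ε with hc54
  set c60 := γ*τ + δ*ε with hc60
  simp only [mul_add] at key
  have hu1 : coeff 1 (u : PowerSeries k) = 0 := coeff_A511_eq_zero k u 1 (by intro a b; omega)
  have hu2 : coeff 2 (u : PowerSeries k) = 0 := coeff_A511_eq_zero k u 2 (by intro a b; omega)
  have hu3 : coeff 3 (u : PowerSeries k) = 0 := coeff_A511_eq_zero k u 3 (by intro a b; omega)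
  have hu4 : coeff 4 (u : PowerSeries k) = 0 := coeff_A511_eq_zero k u 4 (by intro a b; omega)
  have hu6 : coeff 6 (u : PowerSeries k) = 0 := coeff_A511_eq_zero k u 6 (by intro a b; omega)
  have hu7 : coeff 7 (u : PowerSeries k) = 0 := coeff_A511_eq_zero k u 7 (by intro a b; omega)
  have hu8 : coeff 8 (u : PowerSeries k) = 0 := coeff_A511_eq_zero k u 8 (by intro a b; omega)
  have hu9 : coeff 9 (u : PowerSeries k) = 0 := coeff_A511_eq_zero k u 9 (by intro a b; omega)
  have hu12 : coeff 12 (u : PowerSeries k) = 0 := coeff_A511_eq_zero k u 12 (by intro a b; omega)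
  have hu13 : coeff 13 (u : PowerSeries k) = 0 := coeff_A511_eq_zero k u 13 (by intro a b; omega)
  have hu14 : coeff 14 (u : PowerSeries k) = 0 := coeff_A511_eq_zero k u 14 (by intro a b; omega)
  have hu17 : coeff 17 (u : PowerSeries k) = 0 := coeff_A511_eq_zero k u 17 (by intro a b; omega)
  have hu18 : coeff 18 (u : PowerSeries k) = 0 := coeff_A511_eq_zero k u 18 (by intro a b; omega)
  have hu19 : coeff 19 (u : PowerSeries k) = 0 := coeff_A511_eq_zero k u 19 (by intro a b; omega)
  have hv1 : coeff 1 (v : PowerSeries k) = 0 := coeff_A511_eq_zero k v 1 (by intro a b; omega)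
  have hv2 : coeff 2 (v : PowerSeries k) = 0 := coeff_A511_eq_zero k v 2 (by intro a b; omega)
  have hv3 : coeff 3 (v : PowerSeries k) = 0 := coeff_A511_eq_zero k v 3 (by intro a b; omega)
  have hv4 : coeff 4 (v : PowerSeries k) = 0 := coeff_A511_eq_zero k v 4 (by intro a b; omega)
  have hv6 : coeff 6 (v : PowerSeries k) = 0 := coeff_A511_eq_zero k v 6 (by intro a b; omega)
  have hv7 : coeff 7 (v : PowerSeries k) = 0 := coeff_A511_eq_zero k v 7 (by intro a b; omega)
  have hv8 : coeff 8 (v : PowerSeries k) = 0 := coeff_A511_eq_zero k v 8 (by intro a b; omega)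
  have hv9 : coeff 9 (v : PowerSeries k) = 0 := coeff_A511_eq_zero k v 9 (by intro a b; omega)
  have hv12 : coeff 12 (v : PowerSeries k) = 0 := coeff_A511_eq_zero k v 12 (by intro a b; omega)
  have hv13 : coeff 13 (v : PowerSeries k) = 0 := coeff_A511_eq_zero k v 13 (by intro a b; omega)
  have e40 := congrArg (coeff 40) key
  simp only [map_add, coeff_mul_C_mul_X_pow, coeff_mul_X_pow', coeff_C_mul, coeff_X_pow, coeff_C_pow', coeff_C] at e40
  norm_num [hu1, hu2, hu3, hu4, hu6, hu7, hu8, hu9, hu12, hu13, hu14, hu17, hu18, hu19, hv1, hv2, hv3, hv4, hv6, hv7, hv8, hv9, hv12, hv13] at e40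
  have e45 := congrArg (coeff 45) key
  simp only [map_add, coeff_mul_C_mul_X_pow, coeff_mul_X_pow', coeff_C_mul, coeff_X_pow, coeff_C_pow', coeff_C] at e45
  norm_num [hu1, hu2, hu3, hu4, hu6, hu7, hu8, hu9, hu12, hu13, hu14, hu17, hu18, hu19, hv1, hv2, hv3, hv4, hv6, hv7, hv8, hv9, hv12, hv13] at e45
  have e46 := congrArg (coeff 46) key
  simp only [map_add, coeff_mul_C_mul_X_pow, coeff_mul_X_pow', coeff_C_mul, coeff_X_pow, coeff_C_pow', coeff_C] at e46
  norm_num [hu1, hu2, hu3, hu4, hu6, hu7, hu8, hu9, hu12, hu13, hu14, hu17, hu18, hu19, hv1, hv2, hv3, hv4, hv6, hv7, hv8, hv9, hv12, hv13] at e46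
  have e50 := congrArg (coeff 50) key
  simp only [map_add, coeff_mul_C_mul_X_pow, coeff_mul_X_pow', coeff_C_mul, coeff_X_pow, coeff_C_pow', coeff_C] at e50
  norm_num [hu1, hu2, hu3, hu4, hu6, hu7, hu8, hu9, hu12, hu13, hu14, hu17, hu18, hu19, hv1, hv2, hv3, hv4, hv6, hv7, hv8, hv9, hv12, hv13, e40, e45, e46] at e50
  have e51 := congrArg (coeff 51) key
  simp only [map_add, coeff_mul_C_mul_X_pow, coeff_mul_X_pow', coeff_C_mul, coeff_X_pow, coeff_C_pow', coeff_C] at e51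
  norm_num [hu1, hu2, hu3, hu4, hu6, hu7, hu8, hu9, hu12, hu13, hu14, hu17, hu18, hu19, hv1, hv2, hv3, hv4, hv6, hv7, hv8, hv9, hv12, hv13, e40, e45, e46, e50] at e51
  have e52 := congrArg (coeff 52) key
  simp only [map_add, coeff_mul_C_mul_X_pow, coeff_mul_X_pow', coeff_C_mul, coeff_X_pow, coeff_C_pow', coeff_C] at e52
  norm_num [hu1, hu2, hu3, hu4, hu6, hu7, hu8, hu9, hu12, hu13, hu14, hu17, hu18, hu19, hv1, hv2, hv3, hv4, hv6, hv7, hv8, hv9, hv12, hv13, e40, e45, e46, e50] at e52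
  have e53 := congrArg (coeff 53) key
  simp only [map_add, coeff_mul_C_mul_X_pow, coeff_mul_X_pow', coeff_C_mul, coeff_X_pow, coeff_C_pow', coeff_C] at e53
  norm_num [hu1, hu2, hu3, hu4, hu6, hu7, hu8, hu9, hu12, hu13, hu14, hu17, hu18, hu19, hv1, hv2, hv3, hv4, hv6, hv7, hv8, hv9, hv12, hv13, e40, e45, e46, e50] at e53
  have e54 := congrArg (coeff 54) key
  simp only [map_add, coeff_mul_C_mul_X_pow, coeff_mul_X_pow', coeff_C_mul, coeff_X_pow, coeff_C_pow', coeff_C] at e54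
  norm_num [hu1, hu2, hu3, hu4, hu6, hu7, hu8, hu9, hu12, hu13, hu14, hu17, hu18, hu19, hv1, hv2, hv3, hv4, hv6, hv7, hv8, hv9, hv12, hv13, e40, e45, e46, e50] at e54
  have e55 := congrArg (coeff 55) key
  simp only [map_add, coeff_mul_C_mul_X_pow, coeff_mul_X_pow', coeff_C_mul, coeff_X_pow, coeff_C_pow', coeff_C] at e55
  norm_num [hu1, hu2, hu3, hu4, hu6, hu7, hu8, hu9, hu12, hu13, hu14, hu17, hu18, hu19, hv1, hv2, hv3, hv4, hv6, hv7, hv8, hv9, hv12, hv13, e40, e45, e46, e50] at e55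
  have e56 := congrArg (coeff 56) key
  simp only [map_add, coeff_mul_C_mul_X_pow, coeff_mul_X_pow', coeff_C_mul, coeff_X_pow, coeff_C_pow', coeff_C] at e56
  norm_num [hu1, hu2, hu3, hu4, hu6, hu7, hu8, hu9, hu12, hu13, hu14, hu17, hu18, hu19, hv1, hv2, hv3, hv4, hv6, hv7, hv8, hv9, hv12, hv13, e40, e45, e46, e50] at e56
  have e58 := congrArg (coeff 58) key
  simp only [map_add, coeff_mul_C_mul_X_pow, coeff_mul_X_pow', coeff_C_mul, coeff_X_pow, coeff_C_pow', coeff_C] at e58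
  norm_num [hu1, hu2, hu3, hu4, hu6, hu7, hu8, hu9, hu12, hu13, hu14, hu17, hu18, hu19, hv1, hv2, hv3, hv4, hv6, hv7, hv8, hv9, hv12, hv13, e40, e45, e46, e50] at e58
  have e59 := congrArg (coeff 59) key
  simp only [map_add, coeff_mul_C_mul_X_pow, coeff_mul_X_pow', coeff_C_mul, coeff_X_pow, coeff_C_pow', coeff_C] at e59
  norm_num [hu1, hu2, hu3, hu4, hu6, hu7, hu8, hu9, hu12, hu13, hu14, hu17, hu18, hu19, hv1, hv2, hv3, hv4, hv6, hv7, hv8, hv9, hv12, hv13, e40, e45, e46, e50] at e59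
  rw [hc47] at e52 e58
  rw [hc48] at e53 e58 e59
  rw [hc53] at e58
  rw [hc54] at e59
  set P := coeff 11 (u : PowerSeries k) with hP
  set Q := coeff 5 (v : PowerSeries k) with hQdef
  set R := coeff 15 (u : PowerSeries k) with hR
  set S := coeff 16 (u : PowerSeries k) with hS
  set T := coeff 10 (v : PowerSeries k) with hT
  set U := coeff 11 (v : PowerSeries k) with hU
  have hne : α + ε ≠ 0 := by
    intro h
    exact one_ne_zero (α := k) (by linear_combination Q * h - e52)
  have hQ : Q ≠ 0 := by
    intro h
    exact one_ne_zero (α := k) (by linear_combination (α + ε) * h - e52)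
  have hb : β = α ^ 2 - α * ε := by
    have h0 : (β + α * ε - α ^ 2) * Q = 0 := by linear_combination e53 - α ^ 2 * e51
    have h1 := (mul_eq_zero.mp h0).resolve_right hQ
    linear_combination h1
  have he : ε = 0 := by
    have h0 : ε * ((α + ε) * (α + ε)) = 0 := by
      linear_combination (α + ε) * e54 - β * ε * e52 - ε * hb + (2 * α * ε ^ 2 + ε ^ 3) * h2
    rcases mul_eq_zero.mp h0 with h | h
    · exact h
    · exact absurd (mul_self_eq_zero.mp h) hne
  subst he
  have hα : α ≠ 0 := by simpa using hne
  have hb2 : β = α ^ 2 := by rw [hb]; ring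
  subst hb2
  have e52' : α * Q = 1 := by linear_combination e52
  have h9 : α ^ 9 * Q - α ^ 2 * γ * Q = 0 := by
    linear_combination α * e59 - α ^ 2 * e58 + α ^ 4 * e56 - α ^ 5 * e55 + α ^ 9 * e51
  have h10 : α * (α ^ 7 - γ) = 0 := by
    calc α * (α ^ 7 - γ) = α * (α ^ 7 - γ) * (α * Q) := by rw [e52', mul_one]
      _ = α ^ 9 * Q - α ^ 2 * γ * Q := by ring
      _ = 0 := h9
  have hγ := (mul_eq_zero.mp h10).resolve_left hα
  exact ⟨rfl, hα, rfl, by linear_combination -hγ⟩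
end
end
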